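/- For the step set S = {(0,1),(0,-1),(1,1),(-1,-1)} (the middle walk of order 6 with c = 1 in the functional equation), with ξ and η the associated group generators and δ = ηξ, the signed orbit sum Σ_{k=0}^{2} [ (xy)∘(η∘δᵏ) − (xy)∘δᵏ ] vanishes identically as a rational function of (x,y). -/

import Mathlib

/-- For the step set `S = {(0,1),(0,-1),(1,1),(-1,-1)}`, with `ξ, η` the associated
group generators and `δ = ηξ` (acting on points as `ξ ∘ η`), the signed orbit sum
`Σ_{k=0}^{2} [ (xy)∘(ηδᵏ) − (xy)∘δᵏ ]` vanishes identically, on the domain where all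
the expressions involved are defined and nonzero. -/
theorem stmt_7 (S : Finset (ℤ × ℤ))
    (hS : S = ({(0, 1), (0, -1), (1, 1), (-1, -1)} : Finset (ℤ × ℤ)))
    (ξ η δ : ℂ × ℂ → ℂ × ℂ)
    (hξ : ∀ p : ℂ × ℂ, ξ p =
      (p.1, (1 / p.2) * (∑ q ∈ S.filter (fun q => q.2 = -1), p.1 ^ q.1) /
        (∑ q ∈ S.filter (fun q => q.2 = 1), p.1 ^ q.1)))
    (hη : ∀ p : ℂ × ℂ, η p =
      ((1 / p.1) * (∑ q ∈ S.filter (fun q => q.1 = -1), p.2 ^ q.2) /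
        (∑ q ∈ S.filter (fun q => q.1 = 1), p.2 ^ q.2), p.2))
    (hδ : ∀ p : ℂ × ℂ, δ p = ξ (η p))
    (x y : ℂ)
    (hdom : ∀ k : ℕ, ∀ q ∈ ({δ^[k] (x, y), δ^[k] (η (x, y)),
        η (δ^[k] (x, y)), η (δ^[k] (η (x, y)))} : Set (ℂ × ℂ)),
      q.1 ≠ 0 ∧ q.2 ≠ 0 ∧ 1 + q.1 ≠ 0) :
    ∑ k ∈ Finset.range 3,
        ((δ^[k] (η (x, y))).1 * (δ^[k] (η (x, y))).2 -
          (δ^[k] (x, y)).1 * (δ^[k] (x, y)).2) = 0 := by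
  subst hS
  have hξ' : ∀ a b : ℂ, a ≠ 0 → b ≠ 0 → 1 + a ≠ 0 → ξ (a, b) = (a, 1/(a*b)) := by
    intro a b ha hb h1
    rw [hξ]
    norm_num [Finset.filter_insert, Finset.sum_insert, Finset.filter_singleton, Prod.ext_iff]
    field_simp
    ring
  have hη' : ∀ a b : ℂ, a ≠ 0 → b ≠ 0 → η (a, b) = (1/(a*b^2), b) := by
    intro a b ha hb
    rw [hη]
    norm_num [Finset.filter_insert, Finset.sum_insert, Finset.filter_singleton, Prod.ext_iff]
    field_simp
  have hδ' : ∀ a b : ℂ, a ≠ 0 → b ≠ 0 → 1 + 1/(a*b^2) ≠ 0 → δ (a, b) = (1/(a*b^2), a*b) := by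
    intro a b ha hb h1
    rw [hδ, hη' a b ha hb, hξ' _ _ (by simp [ha, hb]) hb h1]
    rw [Prod.ext_iff]
    constructor
    · rfl
    · field_simp
  obtain ⟨hx, hy, -⟩ := hdom 0 (x, y) (by simp)
  -- first chain
  have e0 : δ^[0] (x, y) = (x, y) := rfl
  have eη : η (x, y) = (1/(x*y^2), y) := hη' x y hx hy
  have ha1 : (1:ℂ)/(x*y^2) ≠ 0 := by simp [hx, hy]
  obtain ⟨-, -, hd1⟩ := hdom 0 (η (δ^[0] (x, y))) (by simp)
  rw [e0, hη' x y hx hy] at hd1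
  simp only at hd1
  have e1 : δ^[1] (x, y) = (1/(x*y^2), x*y) := by
    rw [Function.iterate_one]; exact hδ' x y hx hy hd1
  obtain ⟨-, -, hd2⟩ := hdom 1 (η (δ^[1] (x, y))) (by simp)
  rw [e1, hη' _ _ ha1 (mul_ne_zero hx hy)] at hd2
  simp only at hd2
  have e2 : δ^[2] (x, y) = (1/((1/(x*y^2))*(x*y)^2), (1/(x*y^2))*(x*y)) := by
    rw [show δ^[2] (x, y) = δ (δ^[1] (x, y)) from Function.iterate_succ_apply' δ 1 (x, y), e1]
    exact hδ' _ _ ha1 (mul_ne_zero hx hy) hd2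
  -- second chain
  have f0 : δ^[0] (η (x, y)) = (1/(x*y^2), y) := by rw [Function.iterate_zero_apply, eη]
  obtain ⟨-, -, gd1⟩ := hdom 0 (η (δ^[0] (η (x, y)))) (by simp)
  rw [f0, hη' _ _ ha1 hy] at gd1
  simp only at gd1
  have f1 : δ^[1] (η (x, y)) = (1/((1/(x*y^2))*y^2), (1/(x*y^2))*y) := by
    rw [Function.iterate_one, eη]
    exact hδ' _ _ ha1 hy gd1
  have hb1 : (1:ℂ)/((1/(x*y^2))*y^2) ≠ 0 := by simp [hx, hy]
  have hb2 : (1/(x*y^2))*y ≠ 0 := mul_ne_zero ha1 hy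
  obtain ⟨-, -, gd2⟩ := hdom 1 (η (δ^[1] (η (x, y)))) (by simp)
  rw [f1, hη' _ _ hb1 hb2] at gd2
  simp only at gd2
  have f2 : δ^[2] (η (x, y)) =
      (1/((1/((1/(x*y^2))*y^2))*((1/(x*y^2))*y)^2), (1/((1/(x*y^2))*y^2))*((1/(x*y^2))*y)) := by
    rw [show δ^[2] (η (x, y)) = δ (δ^[1] (η (x, y))) from
      Function.iterate_succ_apply' δ 1 (η (x, y)), f1]
    exact hδ' _ _ hb1 hb2 gd2
  rw [Finset.sum_range_succ, Finset.sum_range_succ, Finset.sum_range_one,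
    e0, e1, e2, f0, f1, f2]
  simp only
  have hx2 : x ≠ 0 := hx
  have hy2 : y ≠ 0 := hy
  field_simp
  ring_nf
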